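/- Let G be a finite connected partial cube and uv an edge of G. Then the subgraph of G induced by W_uv = {w ∈ V(G) : d(u,w) < d(v,w)} is a convex subgraph of G (and likewise for W_vu). -/

import Mathlib

open SimpleGraph Polynomial

/-- The hypercube `Q_n`: vertices are functions `Fin n → Bool`, two vertices adjacent
iff they differ in exactly one coordinate. -/
def hypercube (n : ℕ) : SimpleGraph (Fin n → Bool) where
  Adj x y := ∃! i, x i ≠ y i
  symm := ⟨by
    rintro x y ⟨i, hi, hu⟩
    exact ⟨i, hi.symm, fun j hj => hu j hj.symm⟩⟩
  loopless := ⟨by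
    rintro x ⟨i, hi, -⟩
    exact hi rfl⟩

/-- `f` is an isometric embedding of `G` into `H` (distances are preserved); its image is
an isometric subgraph of `H`. -/
def IsIsometricEmbedding {V W : Type*} (G : SimpleGraph V) (H : SimpleGraph W)
    (f : V → W) : Prop :=
  Function.Injective f ∧ ∀ u v : V, H.dist (f u) (f v) = G.dist u v

/-- A partial cube: a connected graph isomorphic to an isometric subgraph of some hypercube. -/
def IsPartialCube {V : Type*} (G : SimpleGraph V) : Prop :=
  G.Connected ∧ ∃ (n : ℕ) (f : V → (Fin n → Bool)), IsIsometricEmbedding G (hypercube n) f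

/-- The Djoković–Winkler relation on (unordered) edges: `e = uv` and `f = xy` are related iff
`d(u,x) + d(v,y) ≠ d(u,y) + d(v,x)`. -/
def DWRel {V : Type*} (G : SimpleGraph V) (e f : Sym2 V) : Prop :=
  ∃ u v x y : V, e = s(u, v) ∧ f = s(x, y) ∧
    G.dist u x + G.dist v y ≠ G.dist u y + G.dist v x

/-- The set of edges of `G` that are Θ-related to `e`. -/
def thetaClassOf {V : Type*} (G : SimpleGraph V) (e : Sym2 V) : Set (Sym2 V) :=
  {f | f ∈ G.edgeSet ∧ DWRel G e f}

/-- `C` is a Θ-class of `G`: the class of some edge of `G` under the Djoković–Winkler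
relation. -/
def IsThetaClass {V : Type*} (G : SimpleGraph V) (C : Set (Sym2 V)) : Prop :=
  ∃ e ∈ G.edgeSet, C = thetaClassOf G e

/-- `W_{uv}`: the set of vertices strictly closer to `u` than to `v`. -/
def sideW {V : Type*} (G : SimpleGraph V) (u v : V) : Set V :=
  {w | G.dist u w < G.dist v w}

/-- Two Θ-classes `C₁ = F_{ab}` and `C₂ = F_{uv}` cross: all four sets
`W_{ab} ∩ W_{uv}`, `W_{ba} ∩ W_{uv}`, `W_{ab} ∩ W_{vu}`, `W_{ba} ∩ W_{vu}` are nonempty. -/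
def Crosses {V : Type*} (G : SimpleGraph V) (C₁ C₂ : Set (Sym2 V)) : Prop :=
  ∃ a b u v : V, G.Adj a b ∧ G.Adj u v ∧
    C₁ = thetaClassOf G s(a, b) ∧ C₂ = thetaClassOf G s(u, v) ∧
    (sideW G a b ∩ sideW G u v).Nonempty ∧ (sideW G b a ∩ sideW G u v).Nonempty ∧
    (sideW G a b ∩ sideW G v u).Nonempty ∧ (sideW G b a ∩ sideW G v u).Nonempty

lemma Crosses.symm {V : Type*} {G : SimpleGraph V} {C₁ C₂ : Set (Sym2 V)}
    (h : Crosses G C₁ C₂) : Crosses G C₂ C₁ := by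
  obtain ⟨a, b, u, v, hab, huv, h1, h2, n1, n2, n3, n4⟩ := h
  refine ⟨u, v, a, b, huv, hab, h2, h1, ?_, ?_, ?_, ?_⟩ <;> rw [Set.inter_comm]
  exacts [n1, n3, n2, n4]

/-- The crossing graph `G^#` of a partial cube `G`: vertices are the Θ-classes of `G`,
two Θ-classes being adjacent iff they cross. -/
def crossingGraph {V : Type*} (G : SimpleGraph V) :
    SimpleGraph {C : Set (Sym2 V) // IsThetaClass G C} where
  Adj C₁ C₂ := C₁ ≠ C₂ ∧ Crosses G C₁.1 C₂.1
  symm := ⟨fun _ _ h => ⟨h.1.symm, h.2.symm⟩⟩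
  loopless := ⟨fun _ h => h.1 rfl⟩

/-- A median graph: a connected graph in which every triple of vertices has a unique median. -/
def IsMedianGraph {V : Type*} (G : SimpleGraph V) : Prop :=
  G.Connected ∧ ∀ u v w : V, ∃! x : V,
    G.dist u x + G.dist x v = G.dist u v ∧
    G.dist u x + G.dist x w = G.dist u w ∧
    G.dist v x + G.dist x w = G.dist v w

/-- `α_i(G)`: the number of induced subgraphs of `G` isomorphic to the `i`-cube. -/
noncomputable def cubeCount {V : Type*} (G : SimpleGraph V) (i : ℕ) : ℕ :=
  Nat.card {s : Set V // Nonempty ((G.induce s) ≃g hypercube i)}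

/-- The cube polynomial `C(G,x) = Σ_i α_i(G) xⁱ`. -/
noncomputable def cubePoly {V : Type*} [Finite V] (G : SimpleGraph V) : Polynomial ℕ :=
  ∑ i ∈ Finset.range (Nat.card V + 1), Polynomial.C (cubeCount G i) * Polynomial.X ^ i

/-- `a_i(G)`: the number of `i`-cliques of `G` (note `a_0 = 1`, the empty clique). -/
noncomputable def cliqueCount {V : Type*} (G : SimpleGraph V) (i : ℕ) : ℕ :=
  Nat.card {s : Finset V // G.IsNClique i s}

/-- The clique polynomial `Cl(G,x) = Σ_i a_i(G) xⁱ`. -/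
noncomputable def cliquePoly {V : Type*} [Finite V] (G : SimpleGraph V) : Polynomial ℕ :=
  ∑ i ∈ Finset.range (Nat.card V + 1), Polynomial.C (cliqueCount G i) * Polynomial.X ^ i

/-- A set `S` of vertices is convex: every shortest path between vertices of `S`
stays inside `S`. -/
def ConvexSet {V : Type*} (G : SimpleGraph V) (S : Set V) : Prop :=
  ∀ u ∈ S, ∀ v ∈ S, ∀ p : G.Walk u v, p.length = G.dist u v → ∀ y ∈ p.support, y ∈ S

/-- The convex hull of a vertex set: the smallest convex set containing it. -/
def gConvexHull {V : Type*} (G : SimpleGraph V) (S : Set V) : Set V :=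
  ⋂₀ {T : Set V | ConvexSet G T ∧ S ⊆ T}

/-- The Θ-class `θ` occurs in (the subgraph of `G` induced by) `S`. -/
def OccursIn {V : Type*} (G : SimpleGraph V) (θ : Set (Sym2 V)) (S : Set V) : Prop :=
  ∃ a b : V, G.Adj a b ∧ a ∈ S ∧ b ∈ S ∧ s(a, b) ∈ θ

/-- A `θ₁,θ₂`-alternating 4-cycle `u v w x u`: edges `uv, xw ∈ θ₁` and `ux, vw ∈ θ₂`. -/
def AltFourCycle {V : Type*} (G : SimpleGraph V) (θ₁ θ₂ : Set (Sym2 V)) (u v w x : V) : Prop :=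
  G.Adj u v ∧ G.Adj v w ∧ G.Adj w x ∧ G.Adj x u ∧ u ≠ w ∧ v ≠ x ∧
  s(u, v) ∈ θ₁ ∧ s(x, w) ∈ θ₁ ∧ s(u, x) ∈ θ₂ ∧ s(v, w) ∈ θ₂

/-- A polynomial with nonnegative coefficients is unimodal. -/
def PolyUnimodal (P : Polynomial ℕ) : Prop :=
  ∃ m : ℕ, (∀ i, i < m → P.coeff i ≤ P.coeff (i + 1)) ∧
    (∀ i, m ≤ i → P.coeff (i + 1) ≤ P.coeff i)

/-- Hamming distance. -/
def hamming {n : ℕ} (x y : Fin n → Bool) : ℕ :=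
  (Finset.univ.filter fun i => x i ≠ y i).card

lemma hamming_eq_zero {n : ℕ} {x y : Fin n → Bool} (h : hamming x y = 0) : x = y := by
  funext j
  by_contra hj
  have : j ∈ Finset.univ.filter fun i => x i ≠ y i := by simp [hj]
  have := Finset.card_pos.mpr ⟨j, this⟩
  rw [hamming] at h
  omega

lemma hamming_adj {n : ℕ} {x y : Fin n → Bool} (h : (hypercube n).Adj x y) :
    hamming x y = 1 := by
  obtain ⟨i, hi, hu⟩ := h
  rw [hamming, Finset.card_eq_one]
  exact ⟨i, by ext j; simp only [Finset.mem_filter, Finset.mem_univ, true_and,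
    Finset.mem_singleton]; exact ⟨fun hj => hu j hj, fun hj => hj ▸ hi⟩⟩

lemma hamming_triangle {n : ℕ} (x y z : Fin n → Bool) :
    hamming x z ≤ hamming x y + hamming y z := by
  have hsub : (Finset.univ.filter fun i => x i ≠ z i) ⊆
      (Finset.univ.filter fun i => x i ≠ y i) ∪ (Finset.univ.filter fun i => y i ≠ z i) := by
    intro j hj
    simp only [Finset.mem_filter, Finset.mem_univ, true_and, Finset.mem_union] at *
    by_contra hc
    push_neg at hc
    exact hj (hc.1.symm ▸ hc.2 ▸ rfl)
  calc hamming x z ≤ _ := Finset.card_le_card hsub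
    _ ≤ _ := Finset.card_union_le _ _

lemma hamming_le_walk_length {n : ℕ} {x y : Fin n → Bool} (p : (hypercube n).Walk x y) :
    hamming x y ≤ p.length := by
  induction p with
  | nil => simp [hamming]
  | cons h p ih =>
    calc hamming _ _ ≤ _ := hamming_triangle _ _ _
      _ ≤ 1 + p.length := by rw [hamming_adj h]; omega
      _ = _ := by simp [Nat.add_comm]

lemma exists_walk_hamming {n : ℕ} : ∀ (k : ℕ) (x y : Fin n → Bool), hamming x y = k →
    ∃ p : (hypercube n).Walk x y, p.length = k := by
  intro k
  induction k with
  | zero => intro x y h; exact hamming_eq_zero h ▸ ⟨.nil, rfl⟩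
  | succ k ih =>
    intro x y h
    have hne : (Finset.univ.filter fun i => x i ≠ y i).Nonempty := by
      rw [← Finset.card_pos, ← hamming]; omega
    obtain ⟨i, hi⟩ := hne
    simp only [Finset.mem_filter, Finset.mem_univ, true_and] at hi
    set x' := Function.update x i (y i) with hx'
    have hadj : (hypercube n).Adj x x' := by
      refine ⟨i, by simp [hx', Function.update_self]; exact hi, fun j hj => ?_⟩
      by_contra hji
      exact hj (by simp [hx', Function.update_of_ne hji])
    have hham : hamming x' y = k := by
      have : (Finset.univ.filter fun j => x' j ≠ y j)
          = (Finset.univ.filter fun j => x j ≠ y j).erase i := by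
        ext j
        simp only [Finset.mem_filter, Finset.mem_univ, true_and, Finset.mem_erase]
        constructor
        · intro hj
          have hji : j ≠ i := by
            rintro rfl; exact hj (by simp [hx', Function.update_self])
          exact ⟨hji, by rwa [hx', Function.update_of_ne hji] at hj⟩
        · rintro ⟨hji, hj⟩; rwa [hx', Function.update_of_ne hji]
      rw [hamming, this, Finset.card_erase_of_mem (by simp [hi]), ← hamming, h]
      omega
    obtain ⟨p, hp⟩ := ih x' y hham
    exact ⟨.cons hadj p, by simp [hp]⟩

lemma hypercube_dist {n : ℕ} (x y : Fin n → Bool) :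
    (hypercube n).dist x y = hamming x y := by
  obtain ⟨p, hp⟩ := exists_walk_hamming (hamming x y) x y rfl
  have hle : (hypercube n).dist x y ≤ hamming x y := hp ▸ SimpleGraph.dist_le p
  rcases Nat.eq_zero_or_pos (hamming x y) with h0 | hpos
  · rw [h0, hamming_eq_zero h0]; simp
  · have hne : x ≠ y := by rintro rfl; simp [hamming] at hpos
    have hr : (hypercube n).Reachable x y := ⟨p⟩
    have : (hypercube n).dist x y ≠ 0 := by
      rw [SimpleGraph.dist_ne_zero_iff_ne_and_reachable]; exact ⟨hne, hr⟩
    obtain ⟨q, hq⟩ := SimpleGraph.exists_walk_of_dist_ne_zero this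
    have := hamming_le_walk_length q
    omega

section Main
variable {V : Type*} {G : SimpleGraph V} {n : ℕ} {f : V → Fin n → Bool}

/-- Key characterization: w ∈ W_uv iff f w agrees with f u on the coordinate i₀ where
f u and f v differ. -/
lemma mem_sideW_iff (hf : ∀ a b : V, (hypercube n).dist (f a) (f b) = G.dist a b)
    {u v : V} (huv : G.Adj u v) {i₀ : Fin n} (hi₀ : f u i₀ ≠ f v i₀)
    (hun : ∀ j, f u j ≠ f v j → j = i₀) (w : V) :
    w ∈ sideW G u v ↔ f w i₀ = f u i₀ := by
  have hdu : G.dist u w = hamming (f u) (f w) := by rw [← hf, hypercube_dist]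
  have hdv : G.dist v w = hamming (f v) (f w) := by rw [← hf, hypercube_dist]
  have hbool : ∀ a b c : Bool, a ≠ b → c ≠ a → c = b := by decide
  set A := Finset.univ.filter fun j => f u j ≠ f w j with hA
  set B := Finset.univ.filter fun j => f v j ≠ f w j with hB
  have hagree : ∀ j, j ≠ i₀ → f u j = f v j := fun j hj => by
    by_contra hc; exact hj (hun j hc)
  constructor
  · intro hw
    by_contra hc
    -- then f w i₀ = f v i₀, so A = insert i₀ B, contradicting dist u w < dist v w
    have hwv : f w i₀ = f v i₀ := hbool _ _ _ hi₀ hc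
    have hAB : A = insert i₀ B := by
      ext j
      simp only [hA, hB, Finset.mem_filter, Finset.mem_univ, true_and, Finset.mem_insert]
      rcases eq_or_ne j i₀ with rfl | hj
      · simp [hwv ▸ hi₀]
      · rw [hagree j hj]; tauto
    have hi₀B : i₀ ∉ B := by simp [hB, hwv]
    have : hamming (f u) (f w) = hamming (f v) (f w) + 1 := by
      rw [hamming, hamming, ← hA, ← hB, hAB, Finset.card_insert_of_notMem hi₀B]
    simp only [sideW, Set.mem_setOf_eq] at hw
    omega
  · intro hw
    have hBA : B = insert i₀ A := by
      ext j
      simp only [hA, hB, Finset.mem_filter, Finset.mem_univ, true_and, Finset.mem_insert]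
      rcases eq_or_ne j i₀ with rfl | hj
      · exact ⟨fun _ => Or.inl rfl, fun _ h => hi₀ (hw.symm.trans h.symm)⟩
      · rw [hagree j hj]; tauto
    have hi₀A : i₀ ∉ A := by simp [hA, hw]
    have : hamming (f v) (f w) = hamming (f u) (f w) + 1 := by
      rw [hamming, hamming, ← hA, ← hB, hBA, Finset.card_insert_of_notMem hi₀A]
    simp only [sideW, Set.mem_setOf_eq]
    omega

lemma sideW_convex_aux (hconn : G.Connected)
    (hf : ∀ a b : V, (hypercube n).dist (f a) (f b) = G.dist a b)
    {u v : V} (huv : G.Adj u v) : ConvexSet G (sideW G u v) := by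
  -- find the unique differing coordinate
  have hd1 : (hypercube n).dist (f u) (f v) = 1 := by
    rw [hf]; exact SimpleGraph.dist_eq_one_iff_adj.mpr huv
  have hh1 : hamming (f u) (f v) = 1 := by rw [← hypercube_dist, hd1]
  obtain ⟨i₀, hi₀eq⟩ := Finset.card_eq_one.mp hh1
  have hi₀ : f u i₀ ≠ f v i₀ := by
    have : i₀ ∈ Finset.univ.filter fun j => f u j ≠ f v j := by rw [hi₀eq]; simp
    simpa using this
  have hun : ∀ j, f u j ≠ f v j → j = i₀ := fun j hj => by
    have : j ∈ Finset.univ.filter fun i => f u i ≠ f v i := by simp [hj]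
    rw [hi₀eq] at this; simpa using this
  classical
  intro w hw w' hw' p hp y hy
  rw [mem_sideW_iff hf huv hi₀ hun] at hw hw' ⊢
  -- split the walk at y
  have hsplit : G.dist w y + G.dist y w' = G.dist w w' := by
    have h1 : G.dist w y ≤ (p.takeUntil y hy).length := SimpleGraph.dist_le _
    have h2 : G.dist y w' ≤ (p.dropUntil y hy).length := SimpleGraph.dist_le _
    have h3 : (p.takeUntil y hy).length + (p.dropUntil y hy).length = p.length := by
      rw [← SimpleGraph.Walk.length_append, p.take_spec hy]
    have h4 := hconn.dist_triangle (u := w) (v := y) (w := w')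
    omega
  -- translate to hamming
  have hH : hamming (f w) (f y) + hamming (f y) (f w') = hamming (f w) (f w') := by
    rw [← hypercube_dist, ← hypercube_dist, ← hypercube_dist, hf, hf, hf]; exact hsplit
  -- conclude f y i₀ = f u i₀
  by_contra hc
  have hbool : ∀ a b c : Bool, c ≠ a → c = b → a ≠ b := by decide
  set A := Finset.univ.filter fun j => f w j ≠ f y j with hA
  set B := Finset.univ.filter fun j => f y j ≠ f w' j with hB
  set C := Finset.univ.filter fun j => f w j ≠ f w' j with hC
  have hi₀A : i₀ ∈ A := by
    simp only [hA, Finset.mem_filter, Finset.mem_univ, true_and]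
    exact fun h => hc (h.symm.trans hw)
  have hi₀B : i₀ ∈ B := by
    simp only [hB, Finset.mem_filter, Finset.mem_univ, true_and]
    exact fun h => hc (h.trans hw')
  have hi₀C : i₀ ∉ C := by
    simp only [hC, Finset.mem_filter, Finset.mem_univ, true_and, not_not]
    exact hw.trans hw'.symm
  have hsub : insert i₀ C ⊆ A ∪ B := by
    intro j hj
    rcases Finset.mem_insert.mp hj with rfl | hj
    · exact Finset.mem_union_left _ hi₀A
    · simp only [hA, hB, hC, Finset.mem_filter, Finset.mem_univ, true_and,
        Finset.mem_union] at hj ⊢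
      by_contra hcc
      push_neg at hcc
      exact hj (hcc.1.symm ▸ hcc.2 ▸ rfl)
  have hcard : C.card + 1 ≤ A.card + B.card := by
    calc C.card + 1 = (insert i₀ C).card := (Finset.card_insert_of_notMem hi₀C).symm
      _ ≤ (A ∪ B).card := Finset.card_le_card hsub
      _ ≤ A.card + B.card := Finset.card_union_le _ _
  have : A.card + B.card = C.card := hH
  omega

end Main

/-- In a finite connected partial cube `G`, for every edge `uv` the set
`W_{uv}` (and likewise `W_{vu}`) induces a convex subgraph of `G`. -/
theorem sideW_convex {V : Type*} [Finite V] (G : SimpleGraph V) (hpc : IsPartialCube G)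
    {u v : V} (huv : G.Adj u v) :
    ConvexSet G (sideW G u v) ∧ ConvexSet G (sideW G v u) := by
  obtain ⟨hconn, n, f, _, hf⟩ := hpc
  exact ⟨sideW_convex_aux hconn hf huv, sideW_convex_aux hconn hf huv.symm⟩
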